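/- Every squared-star with exactly 8 faces has signature {3,3,1,1}, {2,2,1,1,1,1}, or {2,2,2,2}, and each of these three signatures is realized by some squared-star with exactly 8 faces. -/

import Mathlib

open scoped Classical
noncomputable section

/-- The vertex set `V = {±1, ±2, ±3, ±4} ⊆ ℤ`. -/
def Vset : Finset ℤ := {1, -1, 2, -2, 3, -3, 4, -4}

/-- An edge of the graph `G₈`: an unordered pair `{u, v}` of elements of `V`
with `|u| ≠ |v|`. -/
def IsFace (e : Finset ℤ) : Prop :=
  ∃ u ∈ Vset, ∃ v ∈ Vset, |u| ≠ |v| ∧ e = {u, v}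

/-- A squared-star: the edge set of a cycle in `G₈`, i.e. a set of at least 3
edges of `G₈` such that every incident vertex is incident to exactly two edges
and any two edges are connected by a chain of successively intersecting edges. -/
def SquaredStar (E : Finset (Finset ℤ)) : Prop :=
  3 ≤ E.card ∧
  (∀ e ∈ E, IsFace e) ∧
  (∀ v : ℤ, (∃ e ∈ E, v ∈ e) → (E.filter fun e => v ∈ e).card = 2) ∧
  ∀ e ∈ E, ∀ f ∈ E,
    Relation.ReflTransGen (fun a b => a ∈ E ∧ b ∈ E ∧ (a ∩ b).Nonempty) e f

/-- The plane of an edge `{u, v}`: the unordered pair `{|u|, |v|}`. -/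
def planeOf (e : Finset ℤ) : Finset ℤ := e.image fun x => |x|

/-- The number of faces of `E` lying in the plane `P`. -/
def planeCount (E : Finset (Finset ℤ)) (P : Finset ℤ) : ℕ :=
  (E.filter fun e => planeOf e = P).card

/-- The signature of a squared-star: the multiset of the numbers of faces in
each plane containing at least one face. -/
def signatureOf (E : Finset (Finset ℤ)) : Multiset ℕ :=
  (E.image planeOf).val.map fun P => planeCount E P

/-- A plane containing exactly two faces of `E` is of adjacent type if those
two faces share a vertex. -/
def AdjacentType (E : Finset (Finset ℤ)) (P : Finset ℤ) : Prop :=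
  planeCount E P = 2 ∧
  ∃ e ∈ E, ∃ f ∈ E, e ≠ f ∧ planeOf e = P ∧ planeOf f = P ∧ (e ∩ f).Nonempty

/-- The number of doubled planes of `E` of adjacent type. -/
def adjDoubledCount (E : Finset (Finset ℤ)) : ℕ :=
  ((E.image planeOf).filter fun P => AdjacentType E P).card

/-- An element of the hyperoctahedral group: a bijection of `V` commuting with
the antipodal map. -/
def IsHyperOct (g : ℤ → ℤ) : Prop :=
  Set.BijOn g ↑Vset ↑Vset ∧ ∀ v ∈ Vset, g (-v) = -g v

/-- The action of a signed permutation on a set of faces. -/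
def actStar (g : ℤ → ℤ) (E : Finset (Finset ℤ)) : Finset (Finset ℤ) :=
  E.image fun e => e.image g

/-- Two squared-stars are equivalent if a signed permutation carries one to the
other. -/
def StarEquiv (E F : Finset (Finset ℤ)) : Prop :=
  ∃ g : ℤ → ℤ, IsHyperOct g ∧ F = actStar g E



-- ========== auxiliary material ==========
set_option linter.unusedSectionVars false

def sixPlanes : Finset (Finset ℤ) := {{1,2},{1,3},{1,4},{2,3},{2,4},{3,4}}

def allFaces : Finset (Finset ℤ) :=
  { {1,2},{1,-2},{-1,2},{-1,-2}, {1,3},{1,-3},{-1,3},{-1,-3}, {1,4},{1,-4},{-1,4},{-1,-4},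
    {2,3},{2,-3},{-2,3},{-2,-3}, {2,4},{2,-4},{-2,4},{-2,-4}, {3,4},{3,-4},{-3,4},{-3,-4} }

lemma face_mem (e : Finset ℤ) (h : IsFace e) : e ∈ allFaces := by
  obtain ⟨u, hu, v, hv, hne, rfl⟩ := h
  fin_cases hu <;> fin_cases hv <;> revert hne <;> decide

lemma fact1 : ∀ e ∈ allFaces, planeOf e ∈ sixPlanes := by decide
lemma fact2 : ∀ e ∈ allFaces, (Vset.filter fun v => v ∈ e).card = 2 := by decide
lemma fact3 : ∀ e ∈ allFaces, ∀ i ∈ ({1,2,3,4} : Finset ℤ),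
    (i ∈ planeOf e ↔ (i ∈ e ∨ -i ∈ e)) ∧ ¬(i ∈ e ∧ -i ∈ e) := by decide
lemma sieve : ∀ P ∈ sixPlanes, P = {1,2} ∨ P = {1,3} ∨ P = {1,4} ∨ P = {2,3} ∨
    P = {2,4} ∨ P = {3,4} := by decide

section
variable (E : Finset (Finset ℤ)) (hE : ∀ e ∈ E, e ∈ allFaces) (hcard : E.card = 8)
  (hdeg : ∀ v : ℤ, (∃ e ∈ E, v ∈ e) → (E.filter fun e => v ∈ e).card = 2)

include hE hcard hdeg

lemma deg_le (v : ℤ) : (E.filter fun e => v ∈ e).card ≤ 2 := by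
  by_cases h : ∃ e ∈ E, v ∈ e
  · exact le_of_eq (hdeg v h)
  · push_neg at h
    rw [Finset.filter_eq_empty_iff.2 h]; simp

lemma handshake : ∑ v ∈ Vset, (E.filter fun e => v ∈ e).card = 16 := by
  have : ∀ v ∈ Vset, (E.filter fun e => v ∈ e).card = ∑ e ∈ E, if v ∈ e then 1 else 0 := by
    intro v _; rw [Finset.card_filter]
  rw [Finset.sum_congr rfl this, Finset.sum_comm]
  have : ∀ e ∈ E, (∑ v ∈ Vset, if v ∈ e then 1 else 0) = 2 := by
    intro e he; rw [← Finset.card_filter]; exact fact2 e (hE e he)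
  rw [Finset.sum_congr rfl this]; simp [hcard]

lemma deg_eq (v : ℤ) (hv : v ∈ Vset) : (E.filter fun e => v ∈ e).card = 2 := by
  by_contra h
  have h0 : (E.filter fun e => v ∈ e).card ≤ 1 := by
    have := deg_le E hE hcard hdeg v; omega
  have hs := handshake E hE hcard hdeg
  rw [← Finset.add_sum_erase _ _ hv] at hs
  have : ∑ w ∈ Vset.erase v, (E.filter fun e => w ∈ e).card ≤ 14 := by
    calc ∑ w ∈ Vset.erase v, (E.filter fun e => w ∈ e).card
        ≤ ∑ w ∈ Vset.erase v, 2 := Finset.sum_le_sum fun w _ => deg_le E hE hcard hdeg w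
      _ = 14 := by rw [Finset.sum_const, Finset.card_erase_of_mem hv]; rfl
  omega

lemma planedeg (i : ℤ) (hi : i ∈ ({1,2,3,4} : Finset ℤ)) :
    (E.filter fun e => i ∈ planeOf e).card = 4 := by
  have hco : E.filter (fun e => i ∈ planeOf e) = E.filter (fun e => i ∈ e ∨ -i ∈ e) :=
    Finset.filter_congr fun e he => (fact3 e (hE e he) i hi).1
  have hdis : Disjoint (E.filter fun e => i ∈ e) (E.filter fun e => -i ∈ e) := by
    rw [Finset.disjoint_left]
    intro e h1 h2
    rw [Finset.mem_filter] at h1 h2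
    exact (fact3 e (hE e h1.1) i hi).2 ⟨h1.2, h2.2⟩
  have hiv : i ∈ Vset := by fin_cases hi <;> decide
  have hiv' : -i ∈ Vset := by fin_cases hi <;> decide
  rw [hco, Finset.filter_or, Finset.card_union_of_disjoint hdis,
    deg_eq E hE hcard hdeg i hiv, deg_eq E hE hcard hdeg (-i) hiv']

lemma planedeg_sum (i : ℤ) (hi : i ∈ ({1,2,3,4} : Finset ℤ)) :
    ∑ P ∈ sixPlanes.filter (fun P => i ∈ P), planeCount E P = 4 := by
  rw [← planedeg E hE hcard hdeg i hi]
  rw [Finset.card_eq_sum_card_fiberwise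
    (f := planeOf) (t := sixPlanes.filter (fun P => i ∈ P)) (fun e he => by
      rw [Finset.mem_coe, Finset.mem_filter] at he
      exact Finset.mem_coe.2 (Finset.mem_filter.2 ⟨fact1 e (hE e he.1), he.2⟩))]
  refine Finset.sum_congr rfl fun P hP => ?_
  rw [Finset.mem_filter] at hP
  unfold planeCount
  congr 1
  rw [Finset.filter_filter]
  exact Finset.filter_congr fun e he => by
    constructor
    · intro h; exact ⟨by rw [h]; exact hP.2, h⟩
    · intro h; exact h.2

lemma total_sum : ∑ P ∈ sixPlanes, planeCount E P = 8 := by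
  rw [← hcard]
  exact (Finset.card_eq_sum_card_fiberwise (fun e he => fact1 e (hE e he))).symm

end

lemma no_split (E : Finset (Finset ℤ))
    (hconn : ∀ e ∈ E, ∀ f ∈ E,
      Relation.ReflTransGen (fun a b => a ∈ E ∧ b ∈ E ∧ (a ∩ b).Nonempty) e f)
    (A B : Finset ℤ) (hne : A ≠ B) (hd : ∀ x : ℤ, x ∈ A → x ∉ B)
    (hall : ∀ e ∈ E, planeOf e = A ∨ planeOf e = B)
    (e : Finset ℤ) (he : e ∈ E) (heA : planeOf e = A)
    (f : Finset ℤ) (hf : f ∈ E) (hfB : planeOf f = B) : False := by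
  have key : ∀ g, Relation.ReflTransGen
      (fun a b => a ∈ E ∧ b ∈ E ∧ (a ∩ b).Nonempty) e g → planeOf g = A := by
    intro g hg
    induction hg with
    | refl => exact heA
    | tail _ hstep ih =>
      obtain ⟨hbE, hcE, x, hx⟩ := hstep
      rw [Finset.mem_inter] at hx
      have hxb : |x| ∈ planeOf _ := Finset.mem_image_of_mem _ hx.1
      have hxc : |x| ∈ planeOf _ := Finset.mem_image_of_mem _ hx.2
      rw [ih] at hxb
      rcases hall _ hcE with h | h
      · exact h
      · exact absurd (h ▸ hxc) (hd _ hxb)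
  exact hne (key f (hconn e he f hf) ▸ hfB.symm ▸ rfl)

lemma count_pos_exists (E : Finset (Finset ℤ)) (P : Finset ℤ) (h : planeCount E P ≠ 0) :
    ∃ e ∈ E, planeOf e = P := by
  obtain ⟨e, he⟩ := Finset.card_pos.1 (Nat.pos_of_ne_zero h)
  rw [Finset.mem_filter] at he
  exact ⟨e, he.1, he.2⟩

lemma count_zero_none (E : Finset (Finset ℤ)) (P : Finset ℤ) (h : planeCount E P = 0)
    (e : Finset ℤ) (he : e ∈ E) : planeOf e ≠ P := by
  intro hp
  have : e ∈ E.filter fun e => planeOf e = P := Finset.mem_filter.2 ⟨he, hp⟩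
  rw [Finset.card_eq_zero.1 h] at this
  exact absurd this (Finset.notMem_empty e)

lemma image_planes (E : Finset (Finset ℤ)) (hP : ∀ e ∈ E, planeOf e ∈ sixPlanes) :
    E.image planeOf = sixPlanes.filter fun P => planeCount E P ≠ 0 := by
  ext P
  rw [Finset.mem_image, Finset.mem_filter]
  constructor
  · rintro ⟨e, he, rfl⟩
    exact ⟨hP e he, Finset.card_ne_zero_of_mem (Finset.mem_filter.2 ⟨he, rfl⟩)⟩
  · rintro ⟨-, h⟩
    obtain ⟨e, he, hp⟩ := count_pos_exists E P h
    exact ⟨e, he, hp⟩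

lemma sig_eq (E : Finset (Finset ℤ)) (hP : ∀ e ∈ E, planeOf e ∈ sixPlanes) :
    signatureOf E = Multiset.filter (· ≠ 0)
      ({planeCount E {1,2}, planeCount E {1,3}, planeCount E {1,4},
        planeCount E {2,3}, planeCount E {2,4}, planeCount E {3,4}} : Multiset ℕ) := by
  unfold signatureOf
  rw [image_planes E hP, Finset.filter_val,
    show sixPlanes.val = ({{1,2},{1,3},{1,4},{2,3},{2,4},{3,4}} : Multiset (Finset ℤ)) from by decide]
  simp only [Multiset.insert_eq_cons, Multiset.filter_cons, Multiset.filter_singleton,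
    Multiset.filter_zero, Multiset.map_add, Multiset.map_singleton, Multiset.map_zero,
    apply_ite (Multiset.map fun P => planeCount E P)]
  split_ifs <;> simp_all

set_option synthInstance.maxHeartbeats 1000000 in
set_option synthInstance.maxSize 2000 in
set_option maxHeartbeats 4000000 in
lemma core (a b c d e f : Fin 5)
    (h1 : a.val + b.val + c.val = 4) (h2 : a.val + d.val + e.val = 4)
    (h3 : b.val + d.val + f.val = 4) (h4 : c.val + e.val + f.val = 4)
    (hc1 : ¬(b.val=0∧c.val=0∧d.val=0∧e.val=0))
    (hc2 : ¬(a.val=0∧c.val=0∧d.val=0∧f.val=0))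
    (hc3 : ¬(a.val=0∧b.val=0∧e.val=0∧f.val=0)) :
    Multiset.filter (· ≠ 0) ({a.val,b.val,c.val,d.val,e.val,f.val} : Multiset ℕ) = {3,3,1,1} ∨
    Multiset.filter (· ≠ 0) ({a.val,b.val,c.val,d.val,e.val,f.val} : Multiset ℕ) = {2,2,1,1,1,1} ∨
    Multiset.filter (· ≠ 0) ({a.val,b.val,c.val,d.val,e.val,f.val} : Multiset ℕ) = {2,2,2,2} := by
  revert a b c d e f; decide

lemma coreN (a b c d e f : ℕ)
    (h1 : a + b + c = 4) (h2 : a + d + e = 4) (h3 : b + d + f = 4) (h4 : c + e + f = 4)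
    (hc1 : ¬(b=0∧c=0∧d=0∧e=0)) (hc2 : ¬(a=0∧c=0∧d=0∧f=0)) (hc3 : ¬(a=0∧b=0∧e=0∧f=0)) :
    Multiset.filter (· ≠ 0) ({a,b,c,d,e,f} : Multiset ℕ) = {3,3,1,1} ∨
    Multiset.filter (· ≠ 0) ({a,b,c,d,e,f} : Multiset ℕ) = {2,2,1,1,1,1} ∨
    Multiset.filter (· ≠ 0) ({a,b,c,d,e,f} : Multiset ℕ) = {2,2,2,2} := by
  exact core ⟨a, by omega⟩ ⟨b, by omega⟩ ⟨c, by omega⟩ ⟨d, by omega⟩ ⟨e, by omega⟩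
    ⟨f, by omega⟩ h1 h2 h3 h4 hc1 hc2 hc3

-- the universal half
lemma universal (E : Finset (Finset ℤ)) (hSS : SquaredStar E) (hcard : E.card = 8) :
    signatureOf E = {3, 3, 1, 1} ∨ signatureOf E = {2, 2, 1, 1, 1, 1} ∨
      signatureOf E = {2, 2, 2, 2} := by
  obtain ⟨-, hface, hdeg, hconn⟩ := hSS
  have hE : ∀ e ∈ E, e ∈ allFaces := fun e he => face_mem e (hface e he)
  have hP : ∀ e ∈ E, planeOf e ∈ sixPlanes := fun e he => fact1 e (hE e he)
  set m1 := planeCount E {1,2} with hm1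
  set m2 := planeCount E {1,3} with hm2
  set m3 := planeCount E {1,4} with hm3
  set m4 := planeCount E {2,3} with hm4
  set m5 := planeCount E {2,4} with hm5
  set m6 := planeCount E {3,4} with hm6
  have hs1 : m1 + m2 + m3 = 4 := by
    have := planedeg_sum E hE hcard hdeg 1 (by decide)
    rwa [show sixPlanes.filter (fun P => (1:ℤ) ∈ P) = {{1,2},{1,3},{1,4}} from by decide,
      Finset.sum_insert (by decide), Finset.sum_insert (by decide), Finset.sum_singleton,
      ← add_assoc] at this
  have hs2 : m1 + m4 + m5 = 4 := by
    have := planedeg_sum E hE hcard hdeg 2 (by decide)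
    rwa [show sixPlanes.filter (fun P => (2:ℤ) ∈ P) = {{1,2},{2,3},{2,4}} from by decide,
      Finset.sum_insert (by decide), Finset.sum_insert (by decide), Finset.sum_singleton,
      ← add_assoc] at this
  have hs3 : m2 + m4 + m6 = 4 := by
    have := planedeg_sum E hE hcard hdeg 3 (by decide)
    rwa [show sixPlanes.filter (fun P => (3:ℤ) ∈ P) = {{1,3},{2,3},{3,4}} from by decide,
      Finset.sum_insert (by decide), Finset.sum_insert (by decide), Finset.sum_singleton,
      ← add_assoc] at this
  have hs4 : m3 + m5 + m6 = 4 := by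
    have := planedeg_sum E hE hcard hdeg 4 (by decide)
    rwa [show sixPlanes.filter (fun P => (4:ℤ) ∈ P) = {{1,4},{2,4},{3,4}} from by decide,
      Finset.sum_insert (by decide), Finset.sum_insert (by decide), Finset.sum_singleton,
      ← add_assoc] at this
  -- connectivity facts
  have split_gen : ∀ A B : Finset ℤ, A ≠ B → (∀ x : ℤ, x ∈ A → x ∉ B) →
      (∀ e ∈ E, planeOf e = A ∨ planeOf e = B) →
      planeCount E A ≠ 0 → planeCount E B ≠ 0 → False := by
    intro A B hne hd hall hA hB
    obtain ⟨e, he, hpe⟩ := count_pos_exists E A hA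
    obtain ⟨f, hf, hpf⟩ := count_pos_exists E B hB
    exact no_split E hconn A B hne hd hall e he hpe f hf hpf
  have hall_gen : ∀ A B : Finset ℤ,
      (∀ P ∈ sixPlanes, P = A ∨ P = B ∨ planeCount E P ≠ 0 → True) → True := fun _ _ _ => trivial
  have hc1 : ¬(m2 = 0 ∧ m3 = 0 ∧ m4 = 0 ∧ m5 = 0) := by
    rintro ⟨z2, z3, z4, z5⟩
    refine split_gen {1,2} {3,4} (by decide) (by decide) ?_ (by omega) (by omega)
    intro e he
    rcases sieve (planeOf e) (hP e he) with h|h|h|h|h|h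
    · exact Or.inl h
    · exact absurd h (count_zero_none E _ z2 e he)
    · exact absurd h (count_zero_none E _ z3 e he)
    · exact absurd h (count_zero_none E _ z4 e he)
    · exact absurd h (count_zero_none E _ z5 e he)
    · exact Or.inr h
  have hc2 : ¬(m1 = 0 ∧ m3 = 0 ∧ m4 = 0 ∧ m6 = 0) := by
    rintro ⟨z1, z3, z4, z6⟩
    refine split_gen {1,3} {2,4} (by decide) (by decide) ?_ (by omega) (by omega)
    intro e he
    rcases sieve (planeOf e) (hP e he) with h|h|h|h|h|h
    · exact absurd h (count_zero_none E _ z1 e he)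
    · exact Or.inl h
    · exact absurd h (count_zero_none E _ z3 e he)
    · exact absurd h (count_zero_none E _ z4 e he)
    · exact Or.inr h
    · exact absurd h (count_zero_none E _ z6 e he)
  have hc3 : ¬(m1 = 0 ∧ m2 = 0 ∧ m5 = 0 ∧ m6 = 0) := by
    rintro ⟨z1, z2, z5, z6⟩
    refine split_gen {1,4} {2,3} (by decide) (by decide) ?_ (by omega) (by omega)
    intro e he
    rcases sieve (planeOf e) (hP e he) with h|h|h|h|h|h
    · exact absurd h (count_zero_none E _ z1 e he)
    · exact absurd h (count_zero_none E _ z2 e he)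
    · exact Or.inl h
    · exact Or.inr h
    · exact absurd h (count_zero_none E _ z5 e he)
    · exact absurd h (count_zero_none E _ z6 e he)
  rw [sig_eq E hP, ← hm1, ← hm2, ← hm3, ← hm4, ← hm5, ← hm6]
  exact coreN m1 m2 m3 m4 m5 m6 hs1 hs2 hs3 hs4 hc1 hc2 hc3

-- ========== existence ==========

lemma isface_of_mem : ∀ e ∈ allFaces, ∃ u ∈ Vset, ∃ v ∈ Vset, |u| ≠ |v| ∧ e = {u, v} := by
  decide

lemma isface_of_mem' (E : Finset (Finset ℤ)) (h : ∀ e ∈ E, e ∈ allFaces) :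
    ∀ e ∈ E, IsFace e := fun e he => isface_of_mem e (h e he)

lemma mk_star (E : Finset (Finset ℤ)) (a1 a2 a3 a4 a5 a6 a7 a8 : Finset ℤ)
    (hEeq : E = {a1, a2, a3, a4, a5, a6, a7, a8})
    (hfaces : ∀ e ∈ E, IsFace e)
    (hdeg : ∀ v : ℤ, (∃ e ∈ E, v ∈ e) → (E.filter fun e => v ∈ e).card = 2)
    (hcard : E.card = 8)
    (h12 : (a1 ∩ a2).Nonempty) (h23 : (a2 ∩ a3).Nonempty) (h34 : (a3 ∩ a4).Nonempty)
    (h45 : (a4 ∩ a5).Nonempty) (h56 : (a5 ∩ a6).Nonempty) (h67 : (a6 ∩ a7).Nonempty)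
    (h78 : (a7 ∩ a8).Nonempty) :
    SquaredStar E := by
  have mem : ∀ i ∈ ({a1,a2,a3,a4,a5,a6,a7,a8} : Finset (Finset ℤ)), i ∈ E := by
    rw [hEeq]; exact fun i h => h
  have m1 : a1 ∈ E := mem a1 (by simp)
  have m2 : a2 ∈ E := mem a2 (by simp)
  have m3 : a3 ∈ E := mem a3 (by simp)
  have m4 : a4 ∈ E := mem a4 (by simp)
  have m5 : a5 ∈ E := mem a5 (by simp)
  have m6 : a6 ∈ E := mem a6 (by simp)
  have m7 : a7 ∈ E := mem a7 (by simp)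
  have m8 : a8 ∈ E := mem a8 (by simp)
  set r := fun a b => a ∈ E ∧ b ∈ E ∧ (a ∩ b).Nonempty with hr
  have t1 : Relation.ReflTransGen r a1 a1 := .refl
  have t2 : Relation.ReflTransGen r a1 a2 := t1.tail ⟨m1, m2, h12⟩
  have t3 : Relation.ReflTransGen r a1 a3 := t2.tail ⟨m2, m3, h23⟩
  have t4 : Relation.ReflTransGen r a1 a4 := t3.tail ⟨m3, m4, h34⟩
  have t5 : Relation.ReflTransGen r a1 a5 := t4.tail ⟨m4, m5, h45⟩
  have t6 : Relation.ReflTransGen r a1 a6 := t5.tail ⟨m5, m6, h56⟩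
  have t7 : Relation.ReflTransGen r a1 a7 := t6.tail ⟨m6, m7, h67⟩
  have t8 : Relation.ReflTransGen r a1 a8 := t7.tail ⟨m7, m8, h78⟩
  have key : ∀ f ∈ E, Relation.ReflTransGen r a1 f := by
    intro f hf
    rw [hEeq] at hf
    simp only [Finset.mem_insert, Finset.mem_singleton] at hf
    rcases hf with rfl|rfl|rfl|rfl|rfl|rfl|rfl|rfl
    exacts [t1, t2, t3, t4, t5, t6, t7, t8]
  have hsym : Symmetric r := by
    rintro a b ⟨ha, hb, x, hx⟩
    exact ⟨hb, ha, x, by rw [Finset.inter_comm]; exact hx⟩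
  refine ⟨by omega, hfaces, hdeg, ?_⟩
  intro e he f hf
  have hsym' : Std.Symm r := ⟨hsym⟩
  exact ((Relation.ReflTransGen.stdSymm (r := r)).symm _ _ (key e he)).trans (key f hf)

def Estar1 : Finset (Finset ℤ) :=
  {{1,2}, {2,-1}, {-1,-2}, {-2,3}, {3,4}, {4,-3}, {-3,-4}, {-4,1}}
def Estar2 : Finset (Finset ℤ) :=
  {{1,2}, {2,-1}, {-1,3}, {3,-2}, {-2,4}, {4,-3}, {-3,-4}, {-4,1}}
def Estar3 : Finset (Finset ℤ) :=
  {{1,2}, {2,3}, {3,4}, {4,-1}, {-1,-2}, {-2,-3}, {-3,-4}, {-4,1}}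

lemma deg_of_concrete (E : Finset (Finset ℤ)) (W : Finset ℤ)
    (hW : ∀ e ∈ E, ∀ v ∈ e, v ∈ W)
    (h : ∀ v ∈ W, (E.filter fun e => v ∈ e).card = 2) :
    ∀ v : ℤ, (∃ e ∈ E, v ∈ e) → (E.filter fun e => v ∈ e).card = 2 := by
  rintro v ⟨e, he, hv⟩
  exact h v (hW e he v hv)

lemma star1_SS : SquaredStar Estar1 ∧ Estar1.card = 8 ∧ signatureOf Estar1 = ({3,3,1,1} : Multiset ℕ) := by
  refine ⟨mk_star Estar1 ({1,2} : Finset ℤ) ({2,-1} : Finset ℤ) ({-1,-2} : Finset ℤ) ({-2,3} : Finset ℤ) ({3,4} : Finset ℤ) ({4,-3} : Finset ℤ) ({-3,-4} : Finset ℤ) ({-4,1} : Finset ℤ) rfl (isface_of_mem' Estar1 (by decide))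
    (deg_of_concrete Estar1 Vset (by decide) (by decide)) (by decide)
    ⟨2, by decide⟩ ⟨-1, by decide⟩ ⟨-2, by decide⟩ ⟨3, by decide⟩ ⟨4, by decide⟩ ⟨-3, by decide⟩ ⟨-4, by decide⟩, by decide, by decide⟩

lemma star2_SS : SquaredStar Estar2 ∧ Estar2.card = 8 ∧ signatureOf Estar2 = ({2,2,1,1,1,1} : Multiset ℕ) := by
  refine ⟨mk_star Estar2 ({1,2} : Finset ℤ) ({2,-1} : Finset ℤ) ({-1,3} : Finset ℤ) ({3,-2} : Finset ℤ) ({-2,4} : Finset ℤ) ({4,-3} : Finset ℤ) ({-3,-4} : Finset ℤ) ({-4,1} : Finset ℤ) rfl (isface_of_mem' Estar2 (by decide))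
    (deg_of_concrete Estar2 Vset (by decide) (by decide)) (by decide)
    ⟨2, by decide⟩ ⟨-1, by decide⟩ ⟨3, by decide⟩ ⟨-2, by decide⟩ ⟨4, by decide⟩ ⟨-3, by decide⟩ ⟨-4, by decide⟩, by decide, by decide⟩

lemma star3_SS : SquaredStar Estar3 ∧ Estar3.card = 8 ∧ signatureOf Estar3 = ({2,2,2,2} : Multiset ℕ) := by
  refine ⟨mk_star Estar3 ({1,2} : Finset ℤ) ({2,3} : Finset ℤ) ({3,4} : Finset ℤ) ({4,-1} : Finset ℤ) ({-1,-2} : Finset ℤ) ({-2,-3} : Finset ℤ) ({-3,-4} : Finset ℤ) ({-4,1} : Finset ℤ) rfl (isface_of_mem' Estar3 (by decide))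
    (deg_of_concrete Estar3 Vset (by decide) (by decide)) (by decide)
    ⟨2, by decide⟩ ⟨3, by decide⟩ ⟨4, by decide⟩ ⟨-1, by decide⟩ ⟨-2, by decide⟩ ⟨-3, by decide⟩ ⟨-4, by decide⟩, by decide, by decide⟩

/-- A squared-star with exactly 8 faces has signature `{3,3,1,1}`,
`{2,2,1,1,1,1}` or `{2,2,2,2}`, and each of these signatures is realized. -/
theorem signature_eight_faces :
    (∀ E : Finset (Finset ℤ), SquaredStar E → E.card = 8 →
      signatureOf E = {3, 3, 1, 1} ∨ signatureOf E = {2, 2, 1, 1, 1, 1} ∨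
        signatureOf E = {2, 2, 2, 2}) ∧
    (∃ E : Finset (Finset ℤ), SquaredStar E ∧ E.card = 8 ∧
      signatureOf E = {3, 3, 1, 1}) ∧
    (∃ E : Finset (Finset ℤ), SquaredStar E ∧ E.card = 8 ∧
      signatureOf E = {2, 2, 1, 1, 1, 1}) ∧
    (∃ E : Finset (Finset ℤ), SquaredStar E ∧ E.card = 8 ∧
      signatureOf E = {2, 2, 2, 2}) := by
  refine ⟨universal, ?_, ?_, ?_⟩
  · exact ⟨Estar1, star1_SS.1, star1_SS.2.1, star1_SS.2.2⟩
  · exact ⟨Estar2, star2_SS.1, star2_SS.2.1, star2_SS.2.2⟩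
  · exact ⟨Estar3, star3_SS.1, star3_SS.2.1, star3_SS.2.2⟩
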